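/- Let R be a non-singular m×m matrix over k(x) with det R = c·α/β where c ∈ k∖{0} and α, β ∈ k[x] are monic coprime polynomials. Then β·φ_m(R^{-1}) = α·φ_m(R), where φ_m denotes the m-th determinantal denominator. -/

import Mathlib

open Polynomial

noncomputable section

/-- Normalization on a field: every nonzero element normalizes to `1`. -/
noncomputable def fieldNormalizationMonoid (K : Type*) [Field K] : NormalizationMonoid K := by
  classical
  exact
  { normUnit := fun a => if h : a = 0 then 1 else (Units.mk0 a h)⁻¹
    normUnit_zero := dif_pos rfl
    normUnit_one := by
      rw [dif_neg one_ne_zero]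
      exact Units.ext (by simp)
    normUnit_mul_units := fun {a} u ha => by
      rw [dif_neg (mul_ne_zero ha u.ne_zero), dif_neg ha]
      exact Units.ext (by simp [mul_comm]) }

attribute [local instance] fieldNormalizationMonoid

noncomputable local instance (K : Type*) [Field K] : NormalizedGCDMonoid (Polynomial K) :=
  UniqueFactorizationMonoid.toNormalizedGCDMonoid _

variable {k : Type*} [Field k] [CharZero k]

/-- The ℓ-th determinantal denominator of a rational matrix: the monic least common
denominator of all minors of size at most ℓ. -/
def detDen {n p : ℕ} (R : Matrix (Fin n) (Fin p) (RatFunc k)) (ℓ : ℕ) : Polynomial k :=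
  (Finset.range (ℓ + 1)).lcm fun i =>
    (Finset.univ : Finset ((Fin i ↪ Fin n) × (Fin i ↪ Fin p))).lcm fun fg =>
      (Matrix.det fun a b => R (fg.1 a) (fg.2 b)).denom

lemma denom_minor_dvd_detDen {n p : ℕ} (R : Matrix (Fin n) (Fin p) (RatFunc k)) {ℓ i : ℕ}
    (hi : i ≤ ℓ) (f : Fin i ↪ Fin n) (g : Fin i ↪ Fin p) :
    (Matrix.det fun a b => R (f a) (g b)).denom ∣ detDen R ℓ := by
  classical
  have h1 : (Matrix.det fun a b => R (f a) (g b)).denom ∣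
      (Finset.univ : Finset ((Fin i ↪ Fin n) × (Fin i ↪ Fin p))).lcm (fun fg =>
        (Matrix.det fun a b => R (fg.1 a) (fg.2 b)).denom) :=
    Finset.dvd_lcm (s := Finset.univ) (b := ((f, g) : (Fin i ↪ Fin n) × (Fin i ↪ Fin p))) (Finset.mem_univ _)
  exact h1.trans (Finset.dvd_lcm (Finset.mem_range.2 (by omega)))

lemma detDen_ne_zero {n p : ℕ} (R : Matrix (Fin n) (Fin p) (RatFunc k)) (ℓ : ℕ) :
    detDen R ℓ ≠ 0 := by
  classical
  intro h
  rw [detDen, Finset.lcm_eq_zero_iff] at h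
  obtain ⟨i, -, hi⟩ := h
  rw [Finset.lcm_eq_zero_iff] at hi
  obtain ⟨fg, -, hfg⟩ := hi
  exact RatFunc.denom_ne_zero _ hfg

lemma detDen_monic {n p : ℕ} (R : Matrix (Fin n) (Fin p) (RatFunc k)) (ℓ : ℕ) :
    (detDen R ℓ).Monic := by
  classical
  have h1 : normalize (detDen R ℓ) = detDen R ℓ := Finset.normalize_lcm
  have h2 := Polynomial.monic_normalize (p := detDen R ℓ) (detDen_ne_zero R ℓ)
  convert h2 using 2
  exact h1.symm

open Matrix in
lemma jacobi_aux {K : Type*} [Field K] {m i : ℕ}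
    (A B : Matrix (Fin m) (Fin m) K) (hAB : A * B = 1)
    (f g : Fin i ↪ Fin m) :
    ∃ (j : ℕ) (f' g' : Fin j ↪ Fin m) (ε : K), j ≤ m ∧ (ε = 1 ∨ ε = -1) ∧
      A.det * (B.submatrix f g).det = ε * (A.submatrix f' g').det := by
  classical
  set Qf := {a : Fin m // ¬ a ∈ Set.range ⇑f} with hQf
  set Qg := {a : Fin m // ¬ a ∈ Set.range ⇑g} with hQg
  let ef : (Fin i ⊕ Qf) ≃ Fin m :=
    ((Equiv.ofInjective ⇑f f.injective).sumCongr (Equiv.refl Qf)).trans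
      (Equiv.sumCompl (fun a => a ∈ Set.range ⇑f))
  let eg : (Fin i ⊕ Qg) ≃ Fin m :=
    ((Equiv.ofInjective ⇑g g.injective).sumCongr (Equiv.refl Qg)).trans
      (Equiv.sumCompl (fun a => a ∈ Set.range ⇑g))
  have hef1 : ∀ p, ef (Sum.inl p) = f p := fun p => by
    simp only [ef, Equiv.trans_apply, Equiv.sumCongr_apply, Sum.map_inl]; rfl
  have hef2 : ∀ (q : Qf), ef (Sum.inr q) = (q : Fin m) := fun q => by
    simp only [ef, Equiv.trans_apply, Equiv.sumCongr_apply, Sum.map_inr]; rfl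
  have heg1 : ∀ p, eg (Sum.inl p) = g p := fun p => by
    simp only [eg, Equiv.trans_apply, Equiv.sumCongr_apply, Sum.map_inl]; rfl
  have heg2 : ∀ (q : Qg), eg (Sum.inr q) = (q : Fin m) := fun q => by
    simp only [eg, Equiv.trans_apply, Equiv.sumCongr_apply, Sum.map_inr]; rfl
  have hcard : Fintype.card Qf = Fintype.card Qg := by
    have h1 : i + Fintype.card Qf = m := by
      simpa [Fintype.card_sum] using Fintype.card_congr ef
    have h2 : i + Fintype.card Qg = m := by
      simpa [Fintype.card_sum] using Fintype.card_congr eg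
    omega
  let τ : Qf ≃ Qg := Fintype.equivOfCardEq hcard
  let u : Qf → Fin m := fun q => (τ q : Fin m)
  have hu : Function.Injective u := fun a b hab => τ.injective (Subtype.coe_injective hab)
  let W : Matrix (Fin i ⊕ Qf) (Fin i ⊕ Qf) K :=
    Matrix.fromBlocks (B.submatrix ⇑f ⇑g) 0 (Matrix.of fun (q : Qf) (l : Fin i) => B q.1 (g l)) 1
  let Cm : Matrix (Fin m) (Fin m) K := W.submatrix ef.symm ef.symm
  have hdetC : Cm.det = (B.submatrix ⇑f ⇑g).det := by
    rw [show Cm.det = W.det from det_submatrix_equiv_self ef.symm W,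
      show W = Matrix.fromBlocks (B.submatrix ⇑f ⇑g) 0 (Matrix.of fun (q : Qf) (l : Fin i) => B q.1 (g l)) 1 from rfl,
      Matrix.det_fromBlocks_zero₁₂, det_one, mul_one]
  -- columns of Cm
  have hCm1 : ∀ (s : Fin m) (l : Fin i), Cm s (f l) = B s (g l) := by
    intro s l
    have h : ef.symm (f l) = Sum.inl l := by rw [← hef1 l, Equiv.symm_apply_apply]
    show W (ef.symm s) (ef.symm (f l)) = B s (g l)
    rw [h]
    rcases hx : ef.symm s with x | x
    · have := hef1 x; rw [← hx, Equiv.apply_symm_apply] at this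
      simp [W, this]
    · have := hef2 x; rw [← hx, Equiv.apply_symm_apply] at this
      simp [W, this]
  have hCm2 : ∀ (s : Fin m) (q : Qf), Cm s (q : Fin m) = if s = (q : Fin m) then 1 else 0 := by
    intro s q
    have h : ef.symm (q : Fin m) = Sum.inr q := by rw [← hef2 q, Equiv.symm_apply_apply]
    show W (ef.symm s) (ef.symm (q : Fin m)) = _
    rw [h]
    rcases hx : ef.symm s with x | x
    · have hs := hef1 x; rw [← hx, Equiv.apply_symm_apply] at hs
      have : ¬ s = (q : Fin m) := by
        intro hcon; exact q.2 ⟨x, by rw [← hcon, hs]⟩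
      simp [W, this]
    · have hs := hef2 x; rw [← hx, Equiv.apply_symm_apply] at hs
      have : (x = q) ↔ (s = (q : Fin m)) :=
        ⟨fun h' => by rw [hs, h'], fun h' => Subtype.coe_injective (show (x : Fin m) = (q : Fin m) by rw [← hs]; exact h')⟩
      simp only [W, Matrix.fromBlocks_apply₂₂, Matrix.one_apply, this]
  have hcol1 : ∀ (r : Fin m) (l : Fin i), (A * Cm) r (f l) = if r = g l then 1 else 0 := by
    intro r l
    rw [Matrix.mul_apply]
    have : ∀ s, A r s * Cm s (f l) = A r s * B s (g l) := fun s => by rw [hCm1]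
    simp_rw [this]
    rw [← Matrix.mul_apply, hAB, Matrix.one_apply]
  have hcol2 : ∀ (r : Fin m) (q : Qf), (A * Cm) r (q : Fin m) = A r (q : Fin m) := by
    intro r q
    rw [Matrix.mul_apply]
    simp_rw [hCm2, mul_ite, mul_one, mul_zero]
    simp
  let ebar : (Fin i ⊕ Qf) ≃ Fin m := ((Equiv.refl (Fin i)).sumCongr τ).trans eg
  have hebar1 : ∀ p, ebar (Sum.inl p) = g p := fun p => by simp [ebar, heg1]
  have hebar2 : ∀ q, ebar (Sum.inr q) = u q := fun q => by simp [ebar, heg2, u]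
  let Z : Matrix (Fin i ⊕ Qf) (Fin i ⊕ Qf) K :=
    Matrix.fromBlocks 1 (Matrix.of fun (p : Fin i) (q : Qf) => A (g p) q.1) 0
      (A.submatrix u (fun q : Qf => (q : Fin m)))
  have hZ : (A * Cm).submatrix ebar ef = Z := by
    ext x y
    obtain p | p := x <;> obtain l | q := y
    · rw [Matrix.submatrix_apply, hebar1, hef1, hcol1]
      simp only [Z, Matrix.fromBlocks_apply₁₁, Matrix.one_apply]
      congr 1
      simp only [eq_iff_iff]
      exact ⟨fun h => g.injective h, fun h => by rw [h]⟩
    · rw [Matrix.submatrix_apply, hebar1, hef2, hcol2]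
      simp [Z]
    · rw [Matrix.submatrix_apply, hebar2, hef1, hcol1]
      have : ¬ u p = g l := by
        intro hcon; exact (τ p).2 ⟨l, hcon.symm⟩
      simp [Z, this]
    · rw [Matrix.submatrix_apply, hebar2, hef2, hcol2]
      simp [Z, u]
  have hACm : A * Cm = Z.submatrix ebar.symm ef.symm := by
    rw [← hZ]
    ext r j
    simp [Matrix.submatrix_apply]
  let ρ : Equiv.Perm (Fin m) := ebar.symm.trans ef
  have hperm : Z.submatrix ebar.symm ef.symm = (Z.submatrix ef.symm ef.symm).submatrix ρ id := by
    ext r j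
    simp only [Matrix.submatrix_apply, id_eq]
    congr 1
    show ebar.symm r = ef.symm (ef (ebar.symm r))
    rw [Equiv.symm_apply_apply]
  have hdetZ : Z.det = (A.submatrix u (fun q : Qf => (q : Fin m))).det := by
    rw [show Z = Matrix.fromBlocks 1 (Matrix.of fun (p : Fin i) (q : Qf) => A (g p) q.1) 0
      (A.submatrix u (fun q : Qf => (q : Fin m))) from rfl, Matrix.det_fromBlocks_zero₂₁,
      det_one, one_mul]
  set j := Fintype.card Qf with hj
  let e0 : Fin j ≃ Qf := (Fintype.equivFin Qf).symm
  refine ⟨j, ⟨u ∘ e0, hu.comp e0.injective⟩,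
    ⟨fun x => ((e0 x : Qf) : Fin m), Subtype.coe_injective.comp e0.injective⟩,
    ((Equiv.Perm.sign ρ : ℤ) : K), ?_, ?_, ?_⟩
  · have h1 : i + j = m := by
      simpa [Fintype.card_sum] using Fintype.card_congr ef
    omega
  · rcases Int.units_eq_one_or (Equiv.Perm.sign ρ) with h | h
    · left; rw [h]; norm_num
    · right; rw [h]; norm_num
  · have hsub : (A.submatrix (fun x : Fin j => u (e0 x)) (fun x : Fin j => ((e0 x : Qf) : Fin m)))
        = (A.submatrix u (fun q : Qf => (q : Fin m))).submatrix e0 e0 := rfl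
    calc A.det * (B.submatrix ⇑f ⇑g).det = A.det * Cm.det := by rw [hdetC]
      _ = (A * Cm).det := (Matrix.det_mul A Cm).symm
      _ = ((Z.submatrix ef.symm ef.symm).submatrix ρ id).det := by rw [hACm, hperm]
      _ = ((Equiv.Perm.sign ρ : ℤ) : K) * (Z.submatrix ef.symm ef.symm).det := by
            rw [Matrix.det_permute]
      _ = ((Equiv.Perm.sign ρ : ℤ) : K) * (A.submatrix u (fun q : Qf => (q : Fin m))).det := by
            rw [det_submatrix_equiv_self ef.symm Z, hdetZ]
      _ = _ := by
            show _ = _ * (A.submatrix (fun x : Fin j => u (e0 x)) (fun x : Fin j => ((e0 x : Qf) : Fin m))).det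
            rw [hsub, det_submatrix_equiv_self]

lemma detDen_inv_dvd {m : ℕ} (R : Matrix (Fin m) (Fin m) (RatFunc k))
    (hR : R.det ≠ 0) (c : k) (hc : c ≠ 0) (α β : Polynomial k)
    (hα : α.Monic) (hβ : β.Monic) (hαβ : IsCoprime α β)
    (hdet : R.det = RatFunc.C c * (algebraMap (Polynomial k) (RatFunc k) α /
      algebraMap (Polynomial k) (RatFunc k) β)) :
    β * detDen R⁻¹ m ∣ α * detDen R m := by
  classical
  have hα0 : α ≠ 0 := hα.ne_zero
  have hβ0 : β ≠ 0 := hβ.ne_zero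
  set A := algebraMap (Polynomial k) (RatFunc k) with hA
  have hAinj : Function.Injective A := RatFunc.algebraMap_injective k
  set φ := detDen R m with hφdef
  have hφ0 : φ ≠ 0 := detDen_ne_zero R m
  -- det R is a minor of R of size m
  have hdd : R.det.denom ∣ φ := by
    have h := denom_minor_dvd_detDen R (le_refl m)
      (Function.Embedding.refl (Fin m)) (Function.Embedding.refl (Fin m))
    exact h
  -- β divides the denominator of det R
  have hcross : Polynomial.C c * α * R.det.denom = R.det.num * β := by
    apply hAinj
    rw [map_mul, map_mul, map_mul]
    have hCc : RatFunc.C c = A (Polynomial.C c) := (RatFunc.algebraMap_C c).symm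
    have h : A R.det.num / A R.det.denom = RatFunc.C c * (A α / A β) := by
      rw [hA, RatFunc.num_div_denom]; exact hdet
    rw [hCc, mul_div_assoc'] at h
    rw [div_eq_div_iff (RatFunc.algebraMap_ne_zero (RatFunc.denom_ne_zero R.det))
      (RatFunc.algebraMap_ne_zero hβ0)] at h
    exact h.symm
  have hβd : β ∣ R.det.denom := by
    have hcop : IsCoprime β (Polynomial.C c * α) := by
      refine IsCoprime.mul_right ?_ hαβ.symm
      exact ⟨0, Polynomial.C c⁻¹, by
        rw [zero_mul, zero_add, ← Polynomial.C_mul, inv_mul_cancel₀ hc, Polynomial.C_1]⟩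
    exact hcop.dvd_of_dvd_mul_left ⟨R.det.num, by rw [hcross, mul_comm]⟩
  obtain ⟨φ₀, hφ₀⟩ : β ∣ φ := hβd.trans hdd
  have hφ₀0 : φ₀ ≠ 0 := by rintro rfl; rw [mul_zero] at hφ₀; exact hφ0 hφ₀
  have hαφ₀ : α * φ₀ ≠ 0 := mul_ne_zero hα0 hφ₀0
  have hAB : R * R⁻¹ = 1 := Matrix.mul_nonsing_inv R (isUnit_iff_ne_zero.mpr hR)
  have key : ∀ (i : ℕ) (f g : Fin i ↪ Fin m),
      (Matrix.det fun a b => R⁻¹ (f a) (g b)).denom ∣ α * φ₀ := by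
    intro i f g
    obtain ⟨j, f', g', ε, hj, hε, hjac⟩ := jacobi_aux R R⁻¹ hAB f g
    set N := (R.submatrix ⇑f' ⇑g').det with hNdef
    set M' := (Matrix.det fun a b => R⁻¹ (f a) (g b)) with hM'def
    have hjac' : R.det * M' = ε * N := hjac
    have hNd : N.denom ∣ φ := denom_minor_dvd_detDen R hj f' g'
    obtain ⟨t, ht⟩ := hNd
    obtain ⟨e, he⟩ : ∃ e : Polynomial k, A e = ε := by
      rcases hε with h | h
      · exact ⟨1, by rw [h, map_one]⟩
      · exact ⟨-1, by rw [h, map_neg, map_one]⟩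
    have hMeq : M' = A (e * Polynomial.C c⁻¹ * (N.num * t)) / A (α * φ₀) := by
      have hbt : A β * A φ₀ = A N.denom * A t := by
        rw [← map_mul, ← map_mul, ← hφ₀, ht]
      have hN : A N.num / A N.denom = N := RatFunc.num_div_denom N
      have hCc : RatFunc.C c = A (Polynomial.C c) := (RatFunc.algebraMap_C c).symm
      have h1 : A N.denom ≠ 0 := RatFunc.algebraMap_ne_zero (RatFunc.denom_ne_zero N)
      have h2 : A β ≠ 0 := RatFunc.algebraMap_ne_zero hβ0
      rw [eq_div_iff (RatFunc.algebraMap_ne_zero hαφ₀)]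
      apply mul_left_cancel₀ hR
      rw [← mul_assoc, hjac', ← he, hdet, hCc]
      have hNden : N * A N.denom = A N.num := by
        conv_lhs => lhs; rw [← hN]
        exact div_mul_cancel₀ _ h1
      have hinv : A β * (A β)⁻¹ = 1 := mul_inv_cancel₀ h2
      have hcc1 : A (Polynomial.C c) * A (Polynomial.C c⁻¹) = 1 := by
        rw [← map_mul, ← Polynomial.C_mul, mul_inv_cancel₀ hc, Polynomial.C_1, map_one]
      simp only [map_mul]
      linear_combination (A e * A α * (A β)⁻¹ * A t) * hNden
        + (A e * A α * N * (A β)⁻¹) * hbt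
        - (A e * A α * N * A φ₀) * hinv
        - (A α * (A β)⁻¹ * A e * A N.num * A t) * hcc1
    have : M'.denom ∣ α * φ₀ := (RatFunc.denom_dvd hαφ₀).mpr ⟨_, hMeq⟩
    exact this
  have hlcm : detDen R⁻¹ m ∣ α * φ₀ := by
    rw [detDen]
    apply Finset.lcm_dvd
    intro i hi
    apply Finset.lcm_dvd
    intro fg _
    exact key i fg.1 fg.2
  calc β * detDen R⁻¹ m ∣ β * (α * φ₀) := mul_dvd_mul_left β hlcm
    _ = α * φ := by rw [hφ₀]; ring
    _ ∣ α * φ := dvd_rfl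

/-- If `R` is a nonsingular `m × m` rational matrix with
`det R = c * α / β` for `c ∈ k \ {0}` and `α, β` monic coprime polynomials, then
`β * φ_m(R⁻¹) = α * φ_m(R)`. -/
theorem detDen_inv {m : ℕ} (R : Matrix (Fin m) (Fin m) (RatFunc k))
    (hR : R.det ≠ 0) (c : k) (hc : c ≠ 0) (α β : Polynomial k)
    (hα : α.Monic) (hβ : β.Monic) (hαβ : IsCoprime α β)
    (hdet : R.det = RatFunc.C c * (algebraMap (Polynomial k) (RatFunc k) α /
      algebraMap (Polynomial k) (RatFunc k) β)) :
    β * detDen R⁻¹ m = α * detDen R m := by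
  have h1 := detDen_inv_dvd R hR c hc α β hα hβ hαβ hdet
  have hu : IsUnit R.det := isUnit_iff_ne_zero.mpr hR
  have hR' : (R⁻¹).det ≠ 0 := by
    rw [Matrix.det_nonsing_inv, Ring.inverse_eq_inv']
    exact inv_ne_zero hR
  have hdet' : (R⁻¹).det = RatFunc.C c⁻¹ * (algebraMap (Polynomial k) (RatFunc k) β /
      algebraMap (Polynomial k) (RatFunc k) α) := by
    rw [Matrix.det_nonsing_inv, Ring.inverse_eq_inv', hdet, mul_inv, inv_div, map_inv₀]
  have h2 := detDen_inv_dvd R⁻¹ hR' c⁻¹ (inv_ne_zero hc) β α hβ hα hαβ.symm hdet'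
  rw [Matrix.nonsing_inv_nonsing_inv R hu] at h2
  exact Polynomial.eq_of_monic_of_associated (hβ.mul (detDen_monic R⁻¹ m))
    (hα.mul (detDen_monic R m)) (associated_of_dvd_dvd h1 h2)
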